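/- If u, v, and uv are Christoffel words, then the morphisms 0 ↦ u, 1 ↦ v and 0 ↦ v, 1 ↦ u are Sturmian morphisms. -/

import Mathlib

/-- The prefix of length `n` of an infinite binary word. -/
def pref (w : ℕ → Bool) (n : ℕ) : List Bool := (List.range n).map w

/-- `u` occurs as a factor of the infinite word `w`. -/
def FactorInf (u : List Bool) (w : ℕ → Bool) : Prop :=
  ∃ i, u = (List.range u.length).map (fun j => w (i + j))

/-- An infinite binary word is Sturmian if it has exactly `n+1` factors of each length `n`. -/
def Sturmian (w : ℕ → Bool) : Prop :=
  ∀ n, Set.ncard {u : List Bool | u.length = n ∧ FactorInf u w} = n + 1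

/-- A finite binary word is balanced if the numbers of occurrences of `true`
in any two factors of equal length differ by at most 1. -/
def BalancedWord (w : List Bool) : Prop :=
  ∀ u v : List Bool, u <:+: w → v <:+: w → u.length = v.length →
    u.count true ≤ v.count true + 1

/-- A word `u` is central if it is a palindrome and both `0u1` and `1u0` are balanced. -/
def Central (u : List Bool) : Prop :=
  u.reverse = u ∧ BalancedWord (false :: (u ++ [true])) ∧ BalancedWord (true :: (u ++ [false]))

/-- Lower Christoffel words: the letters `0`, `1` and the words `0u1` with `u` central. -/
def IsLowerChristoffel (v : List Bool) : Prop :=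
  v = [false] ∨ v = [true] ∨ ∃ u, Central u ∧ v = false :: (u ++ [true])

/-- Upper Christoffel words: the letters `0`, `1` and the words `1u0` with `u` central. -/
def IsUpperChristoffel (v : List Bool) : Prop :=
  v = [false] ∨ v = [true] ∨ ∃ u, Central u ∧ v = true :: (u ++ [false])

/-- Christoffel words (lower or upper). -/
def IsChristoffel (v : List Bool) : Prop := IsLowerChristoffel v ∨ IsUpperChristoffel v

/-- A finite word is a prefix of an infinite word. -/
def PrefixOf (u : List Bool) (w : ℕ → Bool) : Prop := u = pref w u.length

/-- Apply the morphism `0 ↦ f0, 1 ↦ f1` to a finite word. -/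
def applyM (f0 f1 : List Bool) (u : List Bool) : List Bool :=
  u.flatMap (fun b => bif b then f1 else f0)

/-- `w'` is the image of the infinite word `w` under the morphism `0 ↦ f0, 1 ↦ f1`
(acting by concatenating the images of the letters). -/
def MorphImage (f0 f1 : List Bool) (w w' : ℕ → Bool) : Prop :=
  (∀ n, PrefixOf (applyM f0 f1 (pref w n)) w') ∧
    ∀ n, ∃ m, n ≤ (applyM f0 f1 (pref w m)).length

/-- A morphism is Sturmian if it maps every Sturmian word to a Sturmian word. -/
def IsSturmianMorphism (f0 f1 : List Bool) : Prop :=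
  ∀ w w', Sturmian w → MorphImage f0 f1 w w' → Sturmian w'


set_option maxHeartbeats 1000000
section CPSaux

-- windows
def win (w : ℕ → Bool) (i n : ℕ) : List Bool := (List.range n).map (fun j => w (i + j))

@[simp] lemma length_win (w : ℕ → Bool) (i n : ℕ) : (win w i n).length = n := by simp [win]

@[simp] lemma getElem_win (w : ℕ → Bool) (i n j : ℕ) (h : j < (win w i n).length) :
    (win w i n)[j] = w (i + j) := by simp [win]

lemma win_zero (w : ℕ → Bool) (i : ℕ) : win w i 0 = [] := by simp [win]

lemma win_add (w : ℕ → Bool) (i a b : ℕ) :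
    win w i (a + b) = win w i a ++ win w (i + a) b := by
  apply List.ext_getElem (by simp)
  intro j h1 h2
  simp only [win, List.getElem_map, List.getElem_range]
  rcases lt_or_ge j a with h | h
  · rw [List.getElem_append_left (by simpa using h)]
    simp [win]
  · rw [List.getElem_append_right (by simpa using h)]
    simp only [win, List.getElem_map, List.getElem_range, length_win]
    congr 1
    simp [win]
    omega

lemma win_succ (w : ℕ → Bool) (i n : ℕ) :
    win w i (n + 1) = win w i n ++ [w (i + n)] := by
  simp [win, List.range_succ]

lemma win_drop (w : ℕ → Bool) (i n m : ℕ) (h : m ≤ n) :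
    (win w i n).drop m = win w (i + m) (n - m) := by
  have : n = m + (n - m) := by omega
  rw [this, win_add]
  simp

-- factor sets
def Fac (w : ℕ → Bool) (n : ℕ) : Set (List Bool) := {u | u.length = n ∧ FactorInf u w}

lemma mem_Fac_iff {w : ℕ → Bool} {n : ℕ} {u : List Bool} :
    u ∈ Fac w n ↔ ∃ i, u = win w i n := by
  constructor
  · rintro ⟨hl, i, hu⟩; exact ⟨i, by rw [hu, hl]; rfl⟩
  · rintro ⟨i, rfl⟩; exact ⟨by simp, i, by simp [win]⟩

lemma win_mem_Fac (w : ℕ → Bool) (i n : ℕ) : win w i n ∈ Fac w n := mem_Fac_iff.2 ⟨i, rfl⟩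

lemma finite_length_eq (n : ℕ) : {l : List Bool | l.length = n}.Finite := by
  induction n with
  | zero =>
    convert Set.finite_singleton ([] : List Bool)
    ext l; simp [List.length_eq_zero_iff]
  | succ n ih =>
    have : {l : List Bool | l.length = n+1} ⊆
        (fun p : Bool × List Bool => p.1 :: p.2) '' ((Set.univ : Set Bool) ×ˢ {l | l.length = n}) := by
      rintro (_|⟨b,l⟩) h
      · simp at h
      · exact ⟨(b,l), ⟨trivial, by simpa using h⟩, rfl⟩
    exact Set.Finite.subset (Set.Finite.image _ ((Set.finite_univ).prod ih)) this

lemma Fac_finite (w : ℕ → Bool) (n : ℕ) : (Fac w n).Finite :=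
  (finite_length_eq n).subset (fun u hu => hu.1)

noncomputable def pc (w : ℕ → Bool) (n : ℕ) : ℕ := (Fac w n).ncard

lemma sturmian_iff_pc {w : ℕ → Bool} : Sturmian w ↔ ∀ n, pc w n = n + 1 := Iff.rfl

@[simp] lemma pc_zero (w : ℕ → Bool) : pc w 0 = 1 := by
  have : Fac w 0 = {[]} := by
    ext u
    simp only [mem_Fac_iff, win_zero, Set.mem_singleton_iff]
    constructor
    · rintro ⟨i, rfl⟩; rfl
    · rintro rfl; exact ⟨0, rfl⟩
  simp [pc, this]

-- right special factors
def RSet (w : ℕ → Bool) (n : ℕ) : Set (List Bool) :=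
  {z | z ∈ Fac w n ∧ (z ++ [false]) ∈ Fac w (n+1) ∧ (z ++ [true]) ∈ Fac w (n+1)}

lemma RSet_finite (w : ℕ → Bool) (n : ℕ) : (RSet w n).Finite :=
  (Fac_finite w n).subset (fun z hz => hz.1)

lemma pc_succ (w : ℕ → Bool) (n : ℕ) :
    pc w (n+1) = pc w n + (RSet w n).ncard := by
  classical
  set E : Bool → Set (List Bool) := fun b => {z ∈ Fac w n | z ++ [b] ∈ Fac w (n+1)} with hE
  have hEfin : ∀ b, (E b).Finite := fun b => (Fac_finite w n).subset (fun z hz => hz.1)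
  have hA : Fac w (n+1) = (fun z => z ++ [false]) '' E false ∪ (fun z => z ++ [true]) '' E true := by
    ext u
    constructor
    · intro hu
      rcases mem_Fac_iff.1 hu with ⟨i, rfl⟩
      have h1 : win w i (n+1) = win w i n ++ [w (i+n)] := win_succ w i n
      have h2 : win w i n ∈ E (w (i+n)) := by
        refine ⟨win_mem_Fac w i n, ?_⟩
        rw [← h1]; exact win_mem_Fac w i (n+1)
      cases hb : w (i + n)
      · left; exact ⟨win w i n, by rw [hb] at h2; exact h2, by rw [h1, hb]⟩
      · right; exact ⟨win w i n, by rw [hb] at h2; exact h2, by rw [h1, hb]⟩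
    · rintro (⟨z, hz, rfl⟩ | ⟨z, hz, rfl⟩) <;> exact hz.2
  have hinj : ∀ b : Bool, Function.Injective (fun z : List Bool => z ++ [b]) := by
    intro b z1 z2 h
    simpa using (List.append_inj' h rfl).1
  have hdisj : Disjoint ((fun z => z ++ [false]) '' E false) ((fun z => z ++ [true]) '' E true) := by
    rw [Set.disjoint_left]
    rintro u ⟨z, _, rfl⟩ ⟨z', _, h⟩
    have := (List.append_inj' h rfl).2
    simp at this
  have hcard : (Fac w (n+1)).ncard = (E false).ncard + (E true).ncard := by
    rw [hA, Set.ncard_union_eq hdisj ((hEfin false).image _) ((hEfin true).image _),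
      Set.ncard_image_of_injective _ (hinj false), Set.ncard_image_of_injective _ (hinj true)]
  have hunion : E false ∪ E true = Fac w n := by
    ext z
    constructor
    · rintro (hz | hz) <;> exact hz.1
    · intro hz
      rcases mem_Fac_iff.1 hz with ⟨i, rfl⟩
      have h2 : win w i n ∈ E (w (i+n)) := by
        refine ⟨hz, ?_⟩
        rw [← win_succ]; exact win_mem_Fac w i (n+1)
      cases hb : w (i+n)
      · left; rw [hb] at h2; exact h2
      · right; rw [hb] at h2; exact h2
  have hinter : E false ∩ E true = RSet w n := by
    ext z
    constructor
    · rintro ⟨⟨h1, h2⟩, ⟨_, h3⟩⟩; exact ⟨h1, h2, h3⟩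
    · rintro ⟨h1, h2, h3⟩; exact ⟨⟨h1, h2⟩, ⟨h1, h3⟩⟩
  have := Set.ncard_union_add_ncard_inter (E false) (E true) (hEfin false) (hEfin true)
  rw [hunion, hinter] at this
  unfold pc
  omega

lemma win_congr {w : ℕ → Bool} {i j n : ℕ} (h : win w i n = win w j n) {m : ℕ} (hm : m < n) :
    w (i + m) = w (j + m) := by
  have h1 : (win w i n)[m]'(by simpa using hm) = (win w j n)[m]'(by simpa using hm) := by
    congr 1
  rw [getElem_win, getElem_win] at h1
  exact h1

lemma ext_letter {w : ℕ → Bool} {n : ℕ} (h : RSet w n = ∅) :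
    ∀ i j, win w i n = win w j n → w (i + n) = w (j + n) := by
  intro i j hij
  by_contra hne
  have h1 : win w i n ++ [w (i+n)] ∈ Fac w (n+1) := by
    rw [← win_succ]; exact win_mem_Fac w i (n+1)
  have h2 : win w i n ++ [w (j+n)] ∈ Fac w (n+1) := by
    rw [hij, ← win_succ]; exact win_mem_Fac w j (n+1)
  have hmem : win w i n ∈ RSet w n := by
    refine ⟨win_mem_Fac w i n, ?_, ?_⟩
    · cases hb : w (i+n)
      · rw [← hb]; exact h1
      · cases hb2 : w (j+n)
        · rw [← hb2]; exact h2
        · exact absurd (hb.trans hb2.symm) hne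
    · cases hb : w (i+n)
      · cases hb2 : w (j+n)
        · exact absurd (hb.trans hb2.symm) hne
        · rw [← hb2]; exact h2
      · rw [← hb]; exact h1
  rw [h] at hmem
  exact hmem

lemma RSet_empty_period {w : ℕ → Bool} {n : ℕ} (h : RSet w n = ∅) :
    ∃ k d, 0 < d ∧ ∀ m, k ≤ m → w (m + d) = w m := by
  have e1 := ext_letter h
  -- shifted windows stay equal
  have C : ∀ i j, win w i n = win w j n → ∀ k, win w (i+k) n = win w (j+k) n := by
    intro i j hij k
    induction k with
    | zero => simpa using hij
    | succ k ih =>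
      apply List.ext_getElem (by simp)
      intro m hm1 hm2
      have hmn : m < n := by simpa using hm1
      rw [getElem_win _ _ _ _ (by simpa using hmn), getElem_win _ _ _ _ (by simpa using hmn)]
      rcases lt_or_ge (m+1) n with hm | hm
      · have := win_congr ih hm
        have e : i + k + (m + 1) = i + (k+1) + m := by omega
        have e' : j + k + (m + 1) = j + (k+1) + m := by omega
        rw [e, e'] at this; exact this
      · have hn : m + 1 = n := by omega
        have := e1 _ _ ih
        have e : i + k + n = i + (k+1) + m := by omega
        have e' : j + k + n = j + (k+1) + m := by omega
        rw [e, e'] at this; exact this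
  have L : ∀ i j, win w i n = win w j n → ∀ t, w (i + t) = w (j + t) := by
    intro i j hij t
    rcases lt_or_ge t n with ht | ht
    · exact win_congr hij ht
    · have := e1 _ _ (C i j hij (t - n))
      have e : i + (t-n) + n = i + t := by omega
      have e' : j + (t-n) + n = j + t := by omega
      rw [e, e'] at this; exact this
  obtain ⟨a, -, b, -, hab, hw⟩ :=
    Set.infinite_univ.exists_ne_map_eq_of_mapsTo
      (f := fun a => win w a n) (fun a _ => win_mem_Fac w a n) (Fac_finite w n)
  rcases Nat.lt_or_ge a b with hlt | hge
  · refine ⟨a, b - a, by omega, fun m hm => ?_⟩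
    have := L a b hw (m - a)
    have e : a + (m - a) = m := by omega
    have e' : b + (m - a) = m + (b - a) := by omega
    rw [e, e'] at this; exact this.symm
  · have hlt : b < a := by omega
    refine ⟨b, a - b, by omega, fun m hm => ?_⟩
    have := L a b hw (m - b)
    have e : b + (m - b) = m := by omega
    have e' : a + (m - b) = m + (a - b) := by omega
    rw [e, e'] at this; exact this

lemma period_pc_bounded {w : ℕ → Bool} {k d : ℕ} (hd : 0 < d)
    (h : ∀ m, k ≤ m → w (m + d) = w m) : ∀ N, pc w N ≤ k + d := by
  intro N
  have key : ∀ i, ∃ i', i' < k + d ∧ win w i' N = win w i N := by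
    intro i
    induction i using Nat.strong_induction_on with
    | _ i ih =>
      rcases lt_or_ge i (k+d) with hi | hi
      · exact ⟨i, hi, rfl⟩
      · have heq : win w (i - d) N = win w i N := by
          apply List.ext_getElem (by simp)
          intro m hm1 hm2
          have hmn : m < N := by simpa using hm1
          rw [getElem_win _ _ _ _ (by simpa using hmn), getElem_win _ _ _ _ (by simpa using hmn)]
          have := h (i - d + m) (by omega)
          have e : i - d + m + d = i + m := by omega
          rw [e] at this; exact this.symm
        rcases ih (i - d) (by omega) with ⟨i', hi', he⟩
        exact ⟨i', hi', he.trans heq⟩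
  have hsub : Fac w N ⊆ ↑((Finset.range (k+d)).image (fun i => win w i N)) := by
    intro u hu
    rcases mem_Fac_iff.1 hu with ⟨i, rfl⟩
    rcases key i with ⟨i', h1, h2⟩
    simp only [Finset.coe_image, Set.mem_image, Finset.mem_coe, Finset.mem_range]
    exact ⟨i', h1, h2⟩
  calc pc w N ≤ ((Finset.range (k+d)).image (fun i => win w i N)).card := by
        rw [← Set.ncard_coe_finset]
        exact Set.ncard_le_ncard hsub (Finset.finite_toSet _)
    _ ≤ k + d := le_trans Finset.card_image_le (by simp)

lemma sturmian_RSet_ncard {w : ℕ → Bool} (hw : Sturmian w) (n : ℕ) : (RSet w n).ncard = 1 := by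
  have h1 := pc_succ w n
  have h2 : pc w n = n + 1 := hw n
  have h3 : pc w (n+1) = n + 2 := hw (n+1)
  omega

lemma sturmian_not_period {w : ℕ → Bool} (hw : Sturmian w) :
    ¬ ∃ k d, 0 < d ∧ ∀ m, k ≤ m → w (m + d) = w m := by
  rintro ⟨k, d, hd, h⟩
  have := period_pc_bounded hd h (k + d)
  have h2 : pc w (k+d) = k + d + 1 := hw (k+d)
  omega

lemma sturmian_RSet_unique {w : ℕ → Bool} (hw : Sturmian w) {n : ℕ} {z1 z2 : List Bool}
    (h1 : z1 ∈ RSet w n) (h2 : z2 ∈ RSet w n) : z1 = z2 := by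
  rcases Set.ncard_eq_one.1 (sturmian_RSet_ncard hw n) with ⟨a, ha⟩
  rw [ha] at h1 h2
  simp only [Set.mem_singleton_iff] at h1 h2
  rw [h1, h2]

lemma mem_RSet_length {w : ℕ → Bool} {n : ℕ} {z : List Bool} (h : z ∈ RSet w n) : z.length = n := h.1.1

lemma Fac_drop {w : ℕ → Bool} {n : ℕ} {u : List Bool} (h : u ∈ Fac w n) (m : ℕ) (hm : m ≤ n) :
    u.drop m ∈ Fac w (n - m) := by
  rcases mem_Fac_iff.1 h with ⟨i, rfl⟩
  rw [win_drop w i n m hm]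
  exact win_mem_Fac w (i+m) (n-m)

lemma RSet_drop {w : ℕ → Bool} {n : ℕ} {z : List Bool} (h : z ∈ RSet w n) {m : ℕ} (hm : m ≤ n) :
    z.drop m ∈ RSet w (n - m) := by
  obtain ⟨h1, h2, h3⟩ := h
  have hlen : z.length = n := h1.1
  refine ⟨Fac_drop h1 m hm, ?_, ?_⟩
  · have hf := Fac_drop h2 m (by omega)
    rw [List.drop_append_of_le_length (by omega)] at hf
    have e : n + 1 - m = n - m + 1 := by omega
    rw [e] at hf; exact hf
  · have hf := Fac_drop h3 m (by omega)
    rw [List.drop_append_of_le_length (by omega)] at hf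
    have e : n + 1 - m = n - m + 1 := by omega
    rw [e] at hf; exact hf

lemma sturmian_RSet_suffix {w : ℕ → Bool} (hw : Sturmian w) {m m' : ℕ} {x y : List Bool}
    (hx : x ∈ RSet w m) (hy : y ∈ RSet w m') (h : m ≤ m') :
    x = y.drop (m' - m) := by
  have := RSet_drop hy (m := m' - m) (by omega)
  have e : m' - (m' - m) = m := by omega
  rw [e] at this
  exact sturmian_RSet_unique hw hx this

-- ### Part 2 : morphisms generalities

@[simp] lemma length_pref (w : ℕ → Bool) (n : ℕ) : (pref w n).length = n := by simp [pref]

@[simp] lemma getElem_pref (w : ℕ → Bool) (n j : ℕ) (h : j < (pref w n).length) :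
    (pref w n)[j] = w j := by simp [pref]

lemma pref_succ (w : ℕ → Bool) (n : ℕ) : pref w (n+1) = pref w n ++ [w n] := by
  simp [pref, List.range_succ]

lemma pref_prefix (w : ℕ → Bool) {n m : ℕ} (h : n ≤ m) : pref w n <+: pref w m := by
  refine List.prefix_iff_eq_take.2 ?_
  apply List.ext_getElem (by simp [h]) (fun j h1 h2 => ?_)
  simp at h2
  simp [h2.1]

@[simp] lemma applyM_nil (f0 f1 : List Bool) : applyM f0 f1 [] = [] := rfl

lemma applyM_cons (f0 f1 : List Bool) (b : Bool) (l : List Bool) :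
    applyM f0 f1 (b :: l) = (bif b then f1 else f0) ++ applyM f0 f1 l := by
  simp [applyM]

lemma applyM_append (f0 f1 : List Bool) (a b : List Bool) :
    applyM f0 f1 (a ++ b) = applyM f0 f1 a ++ applyM f0 f1 b := by
  simp [applyM]

lemma applyM_prefix (f0 f1 : List Bool) {x y : List Bool} (h : x <+: y) :
    applyM f0 f1 x <+: applyM f0 f1 y := by
  rcases h with ⟨t, rfl⟩
  exact ⟨applyM f0 f1 t, (applyM_append f0 f1 x t).symm⟩

lemma prefixOf_iff {u : List Bool} {w : ℕ → Bool} :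
    PrefixOf u w ↔ ∀ j (h : j < u.length), u[j] = w j := by
  constructor
  · intro h j hj
    rw [List.getElem_of_eq h]
    simp
  · intro h
    apply List.ext_getElem (by simp) (fun j h1 h2 => ?_)
    rw [h j h1, getElem_pref]

lemma prefixOf_of_isPrefix {x u : List Bool} {w : ℕ → Bool} (h : x <+: u) (hu : PrefixOf u w) :
    PrefixOf x w := by
  rw [prefixOf_iff] at hu ⊢
  intro j hj
  rw [h.getElem hj]
  exact hu j (lt_of_lt_of_le hj h.length_le)

lemma length_applyM_ge {g0 g1 : List Bool} (h0 : g0 ≠ []) (h1 : g1 ≠ []) (l : List Bool) :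
    l.length ≤ (applyM g0 g1 l).length := by
  induction l with
  | nil => simp
  | cons b l ih =>
    rw [applyM_cons]
    cases b
    · have := List.length_pos_iff.2 h0
      simp only [List.length_append, List.length_cons, cond_false]
      omega
    · have := List.length_pos_iff.2 h1
      simp only [List.length_append, List.length_cons, cond_true]
      omega

noncomputable def mImage (g0 g1 : List Bool) (w : ℕ → Bool) : ℕ → Bool :=
  fun j => (applyM g0 g1 (pref w (j+1))).getD j false

lemma mImage_spec {g0 g1 : List Bool} (h0 : g0 ≠ []) (h1 : g1 ≠ []) (w : ℕ → Bool) :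
    MorphImage g0 g1 w (mImage g0 g1 w) := by
  have hlen : ∀ n : ℕ, n ≤ (applyM g0 g1 (pref w n)).length := by
    intro n
    simpa using length_applyM_ge h0 h1 (pref w n)
  have hpre : ∀ {n m : ℕ}, n ≤ m →
      applyM g0 g1 (pref w n) <+: applyM g0 g1 (pref w m) :=
    fun h => applyM_prefix g0 g1 (pref_prefix w h)
  constructor
  · intro n
    rw [prefixOf_iff]
    intro j hj
    have hj1 : j < (applyM g0 g1 (pref w (j+1))).length := lt_of_lt_of_le (by omega) (hlen (j+1))
    have : (applyM g0 g1 (pref w n))[j] = (applyM g0 g1 (pref w (j+1))).getD j false := by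
      rw [List.getD_eq_getElem _ _ hj1]
      rcases le_total n (j+1) with h | h
      · exact ((hpre h).getElem hj).symm.symm
      · exact ((hpre h).getElem hj1).symm
    exact this
  · intro n
    exact ⟨n, hlen n⟩

lemma applyM_comp (f0 f1 g0 g1 : List Bool) (l : List Bool) :
    applyM (applyM f0 f1 g0) (applyM f0 f1 g1) l = applyM f0 f1 (applyM g0 g1 l) := by
  induction l with
  | nil => simp
  | cons b l ih =>
    rw [applyM_cons, applyM_cons, applyM_append, ih]
    cases b <;> simp

lemma isSturmian_comp {f0 f1 g0 g1 : List Bool}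
    (hf : IsSturmianMorphism f0 f1) (hg : IsSturmianMorphism g0 g1)
    (h0 : g0 ≠ []) (h1 : g1 ≠ []) :
    IsSturmianMorphism (applyM f0 f1 g0) (applyM f0 f1 g1) := by
  intro w w' hw hM
  set w1 := mImage g0 g1 w with hw1
  have hMg := mImage_spec h0 h1 w
  have hMf : MorphImage f0 f1 w1 w' := by
    constructor
    · intro k
      have hk : k ≤ (applyM g0 g1 (pref w k)).length := by
        simpa using length_applyM_ge h0 h1 (pref w k)
      have hA := hMg.1 k
      have hpre : pref w1 k <+: applyM g0 g1 (pref w k) := by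
        conv_rhs => rw [hA]
        exact pref_prefix w1 hk
      have h2 : PrefixOf (applyM f0 f1 (applyM g0 g1 (pref w k))) w' := by
        rw [← applyM_comp]; exact hM.1 k
      exact prefixOf_of_isPrefix (applyM_prefix f0 f1 hpre) h2
    · intro n
      rcases hM.2 n with ⟨m, hm⟩
      refine ⟨(applyM g0 g1 (pref w m)).length, ?_⟩
      have hA := hMg.1 m
      rw [← hA, ← applyM_comp]
      exact hm
  exact hf w1 w' (hg w w1 hw hMg) hMf

-- identity morphism
lemma applyM_id (l : List Bool) : applyM [false] [true] l = l := by
  induction l with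
  | nil => rfl
  | cons b l ih => rw [applyM_cons, ih]; cases b <;> rfl

lemma isSturmian_id : IsSturmianMorphism [false] [true] := by
  intro w w' hw hM
  have : ∀ n, w' n = w n := by
    intro n
    have h := hM.1 (n+1)
    rw [applyM_id, prefixOf_iff] at h
    have := h n (by simp)
    simp at this
    exact this.symm
  have hww : w' = w := funext this
  rw [hww]; exact hw

-- exchange morphism
lemma applyM_E (l : List Bool) : applyM [true] [false] l = l.map (fun b => !b) := by
  induction l with
  | nil => rfl
  | cons b l ih => rw [applyM_cons, ih]; cases b <;> rfl

lemma isSturmian_E : IsSturmianMorphism [true] [false] := by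
  intro w w' hw hM
  have hch : ∀ n, w' n = !(w n) := by
    intro n
    have h := hM.1 (n+1)
    rw [applyM_E, prefixOf_iff] at h
    have := h n (by simp)
    simpa using this.symm
  intro n
  have hFac : Fac w' n = (fun l => l.map (fun b => !b)) '' Fac w n := by
    ext u
    simp only [mem_Fac_iff, Set.mem_image]
    constructor
    · rintro ⟨i, rfl⟩
      refine ⟨win w i n, ⟨i, rfl⟩, ?_⟩
      apply List.ext_getElem (by simp) (fun j h1 h2 => ?_)
      have hjn : j < n := by simpa using h1
      simp [hch]
    · rintro ⟨x, ⟨i, rfl⟩, rfl⟩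
      refine ⟨i, ?_⟩
      apply List.ext_getElem (by simp) (fun j h1 h2 => ?_)
      have hjn : j < n := by simpa using h1
      simp [hch]
  have hinj : Function.Injective (fun l : List Bool => l.map (fun b => !b)) := by
    intro a b h
    have := congrArg (List.map (fun b => !b)) h
    simpa [List.map_map, Function.comp_def, Bool.not_not] using this
  have : pc w' n = pc w n := by
    unfold pc
    rw [hFac, Set.ncard_image_of_injective _ hinj]
  have h2 : pc w n = n + 1 := hw n
  show pc w' n = n + 1
  omega

-- ### Part 3 : the morphism G : 0 ↦ 0, 1 ↦ 01

noncomputable def gph (w : ℕ → Bool) (n : ℕ) : ℕ := n + (pref w n).count true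

lemma gph_zero (w : ℕ → Bool) : gph w 0 = 0 := by simp [gph, pref]

lemma gph_step (w : ℕ → Bool) (n : ℕ) :
    (w n = false ∧ gph w (n+1) = gph w n + 1) ∨ (w n = true ∧ gph w (n+1) = gph w n + 2) := by
  have h : (pref w (n+1)).count true = (pref w n).count true + (bif w n then 1 else 0) := by
    rw [pref_succ, List.count_append]
    cases hb : w n <;> simp
  cases hb : w n
  · left; refine ⟨rfl, ?_⟩; simp [gph, h, hb]; omega
  · right; refine ⟨rfl, ?_⟩; simp [gph, h, hb]; omega

lemma gph_lt (w : ℕ → Bool) (n : ℕ) : gph w n < gph w (n+1) := by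
  rcases gph_step w n with ⟨_, h⟩ | ⟨_, h⟩ <;> omega

lemma gph_mono (w : ℕ → Bool) : StrictMono (gph w) := strictMono_nat_of_lt_succ (gph_lt w)

lemma gph_ge (w : ℕ → Bool) (n : ℕ) : n ≤ gph w n := by simp [gph]

lemma gph_step_le (w : ℕ → Bool) (n : ℕ) : gph w (n+1) ≤ gph w n + 2 := by
  rcases gph_step w n with ⟨_, h⟩ | ⟨_, h⟩ <;> omega

lemma length_applyM_G (l : List Bool) :
    (applyM [false] [false,true] l).length = l.length + l.count true := by
  induction l with
  | nil => simp
  | cons b l ih =>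
    rw [applyM_cons]
    cases b <;> simp [ih] <;> omega

section Gcore

variable {w w' : ℕ → Bool} (hM : MorphImage [false] [false,true] w w')
include hM

lemma prefixG (n : ℕ) : applyM [false] [false,true] (pref w n) = pref w' (gph w n) := by
  have h := hM.1 n
  rw [PrefixOf] at h
  rw [h]
  congr 1
  rw [length_applyM_G]
  simp [gph]

lemma applyM_G_pref_succ (n : ℕ) :
    applyM [false] [false,true] (pref w (n+1)) =
      applyM [false] [false,true] (pref w n) ++ (bif w n then [false,true] else [false]) := by
  rw [pref_succ, applyM_append]
  congr 1
  cases hb : w n <;> simp [applyM_cons]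

lemma w'_at_gph (n : ℕ) : w' (gph w n) = false := by
  have h := prefixG hM (n+1)
  have hlt : gph w n < gph w (n+1) := gph_lt w n
  have hlen : (applyM [false] [false,true] (pref w (n+1))).length = gph w (n+1) := by
    rw [length_applyM_G]; simp [gph]
  have hlen2 : (applyM [false] [false,true] (pref w n)).length = gph w n := by
    rw [length_applyM_G]; simp [gph]
  have h1 : (applyM [false] [false,true] (pref w (n+1)))[gph w n]'(by omega) = w' (gph w n) := by
    rw [List.getElem_of_eq h]
    simp
  cases hb : w n
  · have happ : applyM [false] [false,true] (pref w (n+1))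
        = applyM [false] [false,true] (pref w n) ++ [false] := by
      rw [applyM_G_pref_succ hM n, hb]; rfl
    have h2 := List.getElem_of_eq happ (i := gph w n) (by omega)
    rw [← h1, h2, List.getElem_append_right (by omega)]
    simp [hlen2]
  · have happ : applyM [false] [false,true] (pref w (n+1))
        = applyM [false] [false,true] (pref w n) ++ [false, true] := by
      rw [applyM_G_pref_succ hM n, hb]; rfl
    have h2 := List.getElem_of_eq happ (i := gph w n) (by omega)
    rw [← h1, h2, List.getElem_append_right (by omega)]
    simp [hlen2]

lemma w'_after_gph (n : ℕ) (hb : w n = true) : w' (gph w n + 1) = true := by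
  have h := prefixG hM (n+1)
  have hstep : gph w (n+1) = gph w n + 2 := by
    rcases gph_step w n with ⟨h1, _⟩ | ⟨_, h2⟩
    · rw [h1] at hb; cases hb
    · exact h2
  have hlen : (applyM [false] [false,true] (pref w (n+1))).length = gph w (n+1) := by
    rw [length_applyM_G]; simp [gph]
  have h1 : (applyM [false] [false,true] (pref w (n+1)))[gph w n + 1]'(by omega) = w' (gph w n + 1) := by
    rw [List.getElem_of_eq h]
    simp
  have hlen2 : (applyM [false] [false,true] (pref w n)).length = gph w n := by
    rw [length_applyM_G]; simp [gph]
  have happ : applyM [false] [false,true] (pref w (n+1))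
      = applyM [false] [false,true] (pref w n) ++ [false, true] := by
    rw [applyM_G_pref_succ hM n, hb]; rfl
  have h2 := List.getElem_of_eq happ (i := gph w n + 1) (by omega)
  rw [← h1, h2, List.getElem_append_right (by omega)]
  simp [hlen2]

omit hM in
lemma gph_cover (j : ℕ) : ∃ n, gph w n ≤ j ∧ j < gph w (n+1) := by
  induction j with
  | zero =>
    exact ⟨0, by rw [gph_zero], by have := gph_lt w 0; rw [gph_zero] at this; omega⟩
  | succ j ih =>
    rcases ih with ⟨n, h1, h2⟩
    rcases lt_or_ge (j+1) (gph w (n+1)) with h | h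
    · exact ⟨n, by omega, h⟩
    · refine ⟨n+1, by omega, ?_⟩
      have := gph_lt w (n+1)
      omega

lemma charF {j : ℕ} (hj : w' j = false) : ∃ n, j = gph w n := by
  rcases gph_cover (w := w) j with ⟨n, h1, h2⟩
  rcases eq_or_lt_of_le h1 with he | hlt
  · exact ⟨n, he.symm⟩
  · exfalso
    have hle := gph_step_le w n
    have hj2 : j = gph w n + 1 := by omega
    have hw : w n = true := by
      rcases gph_step w n with ⟨_, h⟩ | ⟨h, _⟩
      · omega
      · exact h
    have := w'_after_gph hM n hw
    rw [← hj2] at this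
    rw [this] at hj
    cases hj

lemma charT {j : ℕ} (hj : w' j = true) : ∃ n, j = gph w n + 1 ∧ w n = true := by
  rcases gph_cover (w := w) j with ⟨n, h1, h2⟩
  rcases eq_or_lt_of_le h1 with he | hlt
  · exfalso; rw [← he, w'_at_gph hM] at hj; cases hj
  · have hle := gph_step_le w n
    have hj2 : j = gph w n + 1 := by omega
    have hw : w n = true := by
      rcases gph_step w n with ⟨_, h⟩ | ⟨h, _⟩
      · omega
      · exact h
    exact ⟨n, hj2, hw⟩

omit hM in
lemma win_one (v : ℕ → Bool) (i : ℕ) : win v i 1 = [v i] := by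
  have := win_succ v i 0
  rw [win_zero] at this
  simpa using this

lemma segG (s m : ℕ) :
    win w' (gph w s) (gph w (s+m) - gph w s) = applyM [false] [false,true] (win w s m) := by
  induction m with
  | zero => simp [win_zero]
  | succ m ih =>
    have hmono1 : gph w s ≤ gph w (s+m) := (gph_mono w).le_iff_le.2 (by omega)
    have hlt : gph w (s+m) < gph w (s+m+1) := gph_lt w (s+m)
    have hsplit : gph w (s+m+1) - gph w s
        = (gph w (s+m) - gph w s) + (gph w (s+m+1) - gph w (s+m)) := by omega
    have hadd : s + (m+1) = (s+m) + 1 := by omega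
    rw [hadd, hsplit, win_add]
    have he : gph w s + (gph w (s+m) - gph w s) = gph w (s+m) := by omega
    rw [he, ih, win_succ w s m, applyM_append]
    congr 1
    rcases gph_step w (s+m) with ⟨hb, hstep⟩ | ⟨hb, hstep⟩
    · rw [hstep]
      have h1 : gph w (s+m) + 1 - gph w (s+m) = 1 := by omega
      rw [h1, win_one, w'_at_gph hM, hb]
      simp [applyM_cons]
    · rw [hstep]
      have h1 : gph w (s+m) + 2 - gph w (s+m) = 2 := by omega
      have h2 : win w' (gph w (s+m)) 2 = [w' (gph w (s+m)), w' (gph w (s+m) + 1)] := by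
        have ha := win_succ w' (gph w (s+m)) 1
        rw [win_one] at ha
        rw [ha]
        rfl
      rw [h1, h2, w'_at_gph hM, w'_after_gph hM (s+m) hb, hb]
      simp [applyM_cons]

omit hM in
lemma facSnoc {v : ℕ → Bool} {y : List Bool} {b : Bool} {m : ℕ}
    (h : y ++ [b] ∈ Fac v (m+1)) (hy : y.length = m) : y ∈ Fac v m := by
  rcases mem_Fac_iff.1 h with ⟨i, hw⟩
  rw [win_succ] at hw
  rcases List.append_inj' hw (by simp) with ⟨h1, _⟩
  rw [h1]
  exact win_mem_Fac v i m

omit hM in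
lemma headG_shape (x : List Bool) :
    (applyM [false] [false,true] x ++ [false]).head? = some false := by
  cases x with
  | nil => rfl
  | cons b t => cases b <;> rfl

omit hM in
lemma applyM_G_injective : ∀ {l1 l2 : List Bool},
    applyM [false] [false,true] l1 = applyM [false] [false,true] l2 → l1 = l2 := by
  intro l1
  induction l1 with
  | nil =>
    intro l2 h
    cases l2 with
    | nil => rfl
    | cons b t => exfalso; cases b <;> simp [applyM_cons] at h
  | cons b t ih =>
    intro l2 h
    cases l2 with
    | nil => exfalso; cases b <;> simp [applyM_cons] at h
    | cons b2 t2 =>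
      cases b <;> cases b2 <;> simp [applyM_cons] at h
      · rw [ih h]
      · exfalso
        cases t with
        | nil => simp at h
        | cons c r => cases c <;> simp [applyM_cons] at h
      · exfalso
        cases t2 with
        | nil => simp at h
        | cons c r => cases c <;> simp [applyM_cons] at h
      · rw [ih h]

lemma coreG {z : List Bool} {i n q : ℕ} (hn : 1 ≤ n) (hz : z = win w' i n)
    (hq : i + (n-1) = gph w q) :
    (∃ x, z = applyM [false] [false,true] x ++ [false] ∧ x ++ [w q] ∈ Fac w (x.length + 1)) ∨
    (∃ x, z = true :: (applyM [false] [false,true] x ++ [false]) ∧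
      (true :: x) ++ [w q] ∈ Fac w (x.length + 2)) := by
  cases hb : w' i
  · rcases charF hM hb with ⟨s, hs⟩
    have hφ : gph w s ≤ gph w q := by omega
    have hsq : s ≤ q := (gph_mono w).le_iff_le.1 hφ
    left
    refine ⟨win w s (q - s), ?_, ?_⟩
    · have hn' : n = (gph w q - gph w s) + 1 := by omega
      have hseg := segG hM s (q - s)
      have he : s + (q - s) = q := by omega
      rw [he] at hseg
      rw [hz, hs, hn', win_succ, hseg]
      have he2 : gph w s + (gph w q - gph w s) = gph w q := by omega
      rw [he2, w'_at_gph hM]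
    · have hws : win w s (q - s) ++ [w (s + (q - s))] = win w s ((q-s)+1) := (win_succ w s (q-s)).symm
      have he : s + (q - s) = q := by omega
      rw [he] at hws
      rw [length_win, hws]
      exact win_mem_Fac w s ((q-s)+1)
  · rcases charT hM hb with ⟨s, hs, hws⟩
    have hstep : gph w (s+1) = gph w s + 2 := by
      rcases gph_step w s with ⟨h1, _⟩ | ⟨_, h2⟩
      · rw [h1] at hws; cases hws
      · exact h2
    have hn2 : 2 ≤ n := by
      by_contra hcon
      have hn1 : n = 1 := by omega
      have hiq : i = gph w q := by omega
      rw [hiq, w'_at_gph hM] at hb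
      cases hb
    have hφ : gph w (s+1) ≤ gph w q := by omega
    have hsq : s + 1 ≤ q := (gph_mono w).le_iff_le.1 hφ
    right
    refine ⟨win w (s+1) (q - (s+1)), ?_, ?_⟩
    · have hsplit : z = win w' i 1 ++ win w' (i+1) (n-1) := by
        rw [hz, ← win_add]
        congr 1
        omega
      rw [win_one, hb] at hsplit
      have hseg := segG hM (s+1) (q - (s+1))
      have he : (s+1) + (q - (s+1)) = q := by omega
      rw [he] at hseg
      have hi1 : i + 1 = gph w (s+1) := by omega
      have hn' : n - 1 = (gph w q - gph w (s+1)) + 1 := by omega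
      rw [hsplit, hi1, hn', win_succ, hseg]
      have he2 : gph w (s+1) + (gph w q - gph w (s+1)) = gph w q := by omega
      rw [he2, w'_at_gph hM]
      rfl
    · have hk : q = s + 1 + (q - (s+1)) := by omega
      have hwin : win w s ((q - (s+1)) + 2) = true :: (win w (s+1) (q-(s+1)) ++ [w q]) := by
        rw [show (q - (s+1)) + 2 = 1 + ((q - (s+1)) + 1) by omega, win_add, win_one, hws, win_succ,
          ← hk]
        rfl
      have hlist : (true :: win w (s+1) (q-(s+1))) ++ [w q]
          = win w s ((q - (s+1)) + 2) := by
        rw [hwin]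
        rfl
      rw [length_win, hlist]
      exact win_mem_Fac w s ((q-(s+1))+2)

lemma occG {z : List Bool} {n : ℕ} (hn : 1 ≤ n)
    (hT : z ++ [true] ∈ Fac w' (n+1)) (hF : z ++ [false] ∈ Fac w' (n+1)) (hzl : z.length = n) :
    (∃ x, z = applyM [false] [false,true] x ++ [false] ∧ x ∈ RSet w x.length) ∨
    (∃ x, z = true :: (applyM [false] [false,true] x ++ [false]) ∧
      (true :: x) ∈ RSet w (x.length + 1)) := by
  -- occurrence followed by true
  rcases mem_Fac_iff.1 hT with ⟨i, hiT⟩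
  rw [win_succ] at hiT
  rcases List.append_inj' hiT (by simp) with ⟨hzT, hlastT⟩
  have hwT : w' (i + n) = true := by simpa using hlastT.symm
  rcases charT hM hwT with ⟨q, hq, hwq⟩
  have hcore1 := coreG hM hn hzT (q := q) (by omega)
  rw [hwq] at hcore1
  -- occurrence followed by false
  rcases mem_Fac_iff.1 hF with ⟨i', hiF⟩
  rw [win_succ] at hiF
  rcases List.append_inj' hiF (by simp) with ⟨hzF, hlastF⟩
  have hwF : w' (i' + n) = false := by simpa using hlastF.symm
  -- last letter of z is false
  have hzlast : w' (i' + (n-1)) = false := by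
    have h1 : z[n-1]'(by omega) = w' (i' + (n-1)) := by
      rw [List.getElem_of_eq hzF]
      rw [getElem_win _ _ _ _ (by rw [length_win]; omega)]
    have h2 : z[n-1]'(by omega) = false := by
      rcases hcore1 with ⟨x, hx, _⟩ | ⟨x, hx, _⟩
      · have hA : (applyM [false] [false,true] x).length = n - 1 := by
          have := congrArg List.length hx
          simp at this
          omega
        rw [List.getElem_of_eq hx]
        rw [List.getElem_append_right (by omega)]
        have hidx : n - 1 - (applyM [false] [false,true] x).length = 0 := by omega
        simp [hidx]
      · have hA : (applyM [false] [false,true] x).length + 2 = n := by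
          have := congrArg List.length hx
          simp at this
          omega
        rw [List.getElem_of_eq hx]
        rw [List.getElem_cons]
        rw [dif_neg (by omega)]
        rw [List.getElem_append_right (by omega)]
        have hidx : n - 1 - 1 - (applyM [false] [false,true] x).length = 0 := by omega
        simp [hidx]
    rw [← h1, h2]
  rcases charF hM hzlast with ⟨r, hr⟩
  have hwr : w r = false := by
    by_contra hcon
    have hrt : w r = true := by
      cases hrb : w r
      · exact absurd hrb hcon
      · rfl
    have hug := w'_after_gph hM r hrt
    have he : i' + n = gph w r + 1 := by omega
    rw [← he] at hug
    rw [hug] at hwF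
    cases hwF
  have hcore2 := coreG hM hn hzF (q := r) (by omega)
  rw [hwr] at hcore2
  -- combine
  rcases hcore1 with ⟨x, hx, hxT⟩ | ⟨x, hx, hxT⟩ <;> rcases hcore2 with ⟨y, hy, hyF⟩ | ⟨y, hy, hyF⟩
  · -- both left
    have hxy : x = y := by
      apply applyM_G_injective (l1 := x) (l2 := y)
      have := hx.symm.trans hy
      exact (List.append_inj' this rfl).1
    left
    refine ⟨x, hx, ?_⟩
    have hxF : x ++ [false] ∈ Fac w (x.length + 1) := by rw [hxy]; exact hyF
    exact ⟨facSnoc hxT rfl, hxF, hxT⟩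
  · -- left/right: contradiction via head
    exfalso
    have h1 : z.head? = some false := by rw [hx]; exact headG_shape x
    have h2 : z.head? = some true := by rw [hy]; rfl
    rw [h1] at h2
    cases h2
  · exfalso
    have h1 : z.head? = some true := by rw [hx]; rfl
    have h2 : z.head? = some false := by rw [hy]; exact headG_shape y
    rw [h1] at h2
    cases h2
  · -- both right
    have hxy : x = y := by
      apply applyM_G_injective (l1 := x) (l2 := y)
      have h0 := hx.symm.trans hy
      have h1 : applyM [false] [false,true] x ++ [false] = applyM [false] [false,true] y ++ [false] :=
        List.tail_eq_of_cons_eq h0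
      exact (List.append_inj' h1 rfl).1
    right
    refine ⟨x, hx, ?_⟩
    have hxF : (true :: x) ++ [false] ∈ Fac w (x.length + 1 + 1) := by rw [hxy]; exact hyF
    have hxT' : (true :: x) ++ [true] ∈ Fac w (x.length + 1 + 1) := hxT
    exact ⟨facSnoc (b := true) hxT' (by simp), hxF, hxT'⟩

omit hM in
lemma psi_unique {v : ℕ → Bool} (hv : Sturmian v) {y1 y2 : List Bool}
    (h1 : y1 ∈ RSet v y1.length) (h2 : y2 ∈ RSet v y2.length)
    (hpsi : y1.length + y1.count true = y2.length + y2.count true) : y1 = y2 := by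
  have key : ∀ a b : List Bool, a ∈ RSet v a.length → b ∈ RSet v b.length →
      a.length + a.count true = b.length + b.count true → a.length ≤ b.length → a = b := by
    intro a b ha hb hab hle
    have hsuf : a = b.drop (b.length - a.length) := sturmian_RSet_suffix hv ha hb hle
    have hcnt : a.count true ≤ b.count true := by
      rw [hsuf]; exact (List.drop_sublist _ _).count_le true
    have hlen : a.length = b.length := by omega
    rw [hsuf, hlen]
    simp
  rcases le_total y1.length y2.length with h | h
  · exact key _ _ h1 h2 hpsi h
  · exact (key _ _ h2 h1 hpsi.symm h).symm

omit hM in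
lemma LR_absurd {v : ℕ → Bool} (hv : Sturmian v) {x y : List Bool} {n : ℕ}
    (hxR : x ∈ RSet v x.length) (hyR : (true :: y) ∈ RSet v (y.length + 1))
    (e1 : x.length + x.count true + 1 = n) (e2 : y.length + y.count true + 2 = n) : False := by
  have hyR' : (true :: y) ∈ RSet v (true :: y).length := hyR
  rcases le_total x.length (y.length + 1) with h | h
  · have hsuf : x = (true :: y).drop ((true :: y).length - x.length) :=
      sturmian_RSet_suffix hv hxR hyR' (by simpa using h)
    rcases Nat.eq_or_lt_of_le h with he | hlt
    · have h0 : (true :: y).length - x.length = 0 := by simp; omega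
      rw [h0] at hsuf
      simp at hsuf
      have hc : x.count true = y.count true + 1 := by
        rw [hsuf]; simp
      omega
    · have hk : (true :: y).length - x.length = (y.length - x.length) + 1 := by simp; omega
      rw [hk, List.drop_succ_cons] at hsuf
      have hcnt : x.count true ≤ y.count true := by
        rw [hsuf]; exact (List.drop_sublist _ _).count_le true
      omega
  · have hsuf : (true :: y) = x.drop (x.length - (true :: y).length) :=
      sturmian_RSet_suffix hv hyR' hxR (by simpa using h)
    have hcnt : (true :: y).count true ≤ x.count true := by
      rw [hsuf]; exact (List.drop_sublist _ _).count_le true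
    simp at hcnt
    rcases Nat.eq_or_lt_of_le h with he | hlt
    · omega
    · have : y.length + 1 < x.length := by simpa using hlt
      omega

lemma RSetG_subsingleton (hw : Sturmian w) (n : ℕ) :
    ∀ z1 ∈ RSet w' n, ∀ z2 ∈ RSet w' n, z1 = z2 := by
  intro z1 hz1 z2 hz2
  rcases Nat.eq_zero_or_pos n with hn0 | hn
  · subst hn0
    rw [List.length_eq_zero_iff.1 (mem_RSet_length hz1), List.length_eq_zero_iff.1 (mem_RSet_length hz2)]
  · have hzl1 : z1.length = n := mem_RSet_length hz1
    have hzl2 : z2.length = n := mem_RSet_length hz2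
    rcases occG hM hn hz1.2.2 hz1.2.1 hzl1 with ⟨x, hx, hxR⟩ | ⟨x, hx, hxR⟩ <;>
      rcases occG hM hn hz2.2.2 hz2.2.1 hzl2 with ⟨y, hy, hyR⟩ | ⟨y, hy, hyR⟩
    · -- L L
      have e1 : x.length + x.count true + 1 = n := by
        have := congrArg List.length hx
        rw [hzl1] at this
        simp [length_applyM_G] at this
        omega
      have e2 : y.length + y.count true + 1 = n := by
        have := congrArg List.length hy
        rw [hzl2] at this
        simp [length_applyM_G] at this
        omega
      have hxy : x = y := psi_unique hw hxR hyR (by omega)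
      rw [hx, hy, hxy]
    · -- L R
      exfalso
      have e1 : x.length + x.count true + 1 = n := by
        have := congrArg List.length hx
        rw [hzl1] at this
        simp [length_applyM_G] at this
        omega
      have e2 : y.length + y.count true + 2 = n := by
        have := congrArg List.length hy
        rw [hzl2] at this
        simp [length_applyM_G] at this
        omega
      exact LR_absurd hw hxR hyR e1 e2
    · -- R L
      exfalso
      have e1 : y.length + y.count true + 1 = n := by
        have := congrArg List.length hy
        rw [hzl2] at this
        simp [length_applyM_G] at this
        omega
      have e2 : x.length + x.count true + 2 = n := by
        have := congrArg List.length hx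
        rw [hzl1] at this
        simp [length_applyM_G] at this
        omega
      exact LR_absurd hw hyR hxR e1 e2
    · -- R R
      have e1 : x.length + x.count true + 2 = n := by
        have := congrArg List.length hx
        rw [hzl1] at this
        simp [length_applyM_G] at this
        omega
      have e2 : y.length + y.count true + 2 = n := by
        have := congrArg List.length hy
        rw [hzl2] at this
        simp [length_applyM_G] at this
        omega
      have hyR' : (true :: y) ∈ RSet w (true :: y).length := hyR
      have hxR' : (true :: x) ∈ RSet w (true :: x).length := hxR
      have hxy : (true : Bool) :: x = true :: y := by
        apply psi_unique hw hxR' hyR'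
        simp
        omega
      have : x = y := by injection hxy
      rw [hx, hy, this]

lemma periodic_transfer
    (hper : ∃ k d, 0 < d ∧ ∀ m, k ≤ m → w' (m + d) = w' m) :
    ∃ k d, 0 < d ∧ ∀ m, k ≤ m → w (m + d) = w m := by
  obtain ⟨k, d, hd, hper⟩ := hper
  have step : ∀ a (t : ℕ), k ≤ a → w' (a + t * d) = w' a := by
    intro a t ha
    induction t with
    | zero => simp
    | succ t ih =>
      have he : a + (t+1) * d = (a + t * d) + d := by ring
      rw [he, hper _ (by omega)]
      exact ih
  have per' : ∀ a b, k ≤ a → k ≤ b → a % d = b % d → w' a = w' b := by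
    intro a b ha hb hab
    rcases le_total a b with h | h
    · obtain ⟨c, hc⟩ := (Nat.modEq_iff_dvd' h).1 hab
      rw [Nat.mul_comm] at hc
      have he : b = a + c * d := by omega
      rw [he, step a c ha]
    · obtain ⟨c, hc⟩ := (Nat.modEq_iff_dvd' h).1 hab.symm
      rw [Nat.mul_comm] at hc
      have he : a = b + c * d := by omega
      rw [he, step b c hb]
  have wkey : ∀ n, w n = w' (gph w n + 1) := by
    intro n
    cases hb : w n
    · rcases gph_step w n with ⟨_, hstep⟩ | ⟨h1, _⟩
      · have := w'_at_gph hM (n+1)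
        rw [hstep] at this
        exact this.symm
      · rw [hb] at h1; cases h1
    · exact (w'_after_gph hM n hb).symm
  obtain ⟨n1, hn1, n2, hn2, hne, heq⟩ :=
    (Set.Ici_infinite k).exists_ne_map_eq_of_mapsTo (f := fun n => gph w n % d)
      (fun n _ => Set.mem_Iio.2 (Nat.mod_lt _ hd)) (Set.finite_Iio d)
  rw [Set.mem_Ici] at hn1 hn2
  have hstepL : ∀ u v : ℕ, k ≤ u → k ≤ v → gph w u % d = gph w v % d → w u = w v := by
    intro u v hu hv h
    rw [wkey u, wkey v]
    apply per' _ _ (by have := gph_ge w u; omega) (by have := gph_ge w v; omega)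
    exact Nat.ModEq.add_right 1 h
  have main : ∀ a b : ℕ, k ≤ a → k ≤ b → gph w a % d = gph w b % d →
      ∀ t, gph w (a + t) % d = gph w (b + t) % d ∧ w (a + t) = w (b + t) := by
    intro a b ha hb hab t
    induction t with
    | zero =>
      refine ⟨by simpa using hab, ?_⟩
      simpa using hstepL a b ha hb hab
    | succ t ih =>
      have hL : w (a + t) = w (b + t) := ih.2
      have hR : gph w (a + (t+1)) % d = gph w (b + (t+1)) % d := by
        rcases gph_step w (a+t) with ⟨hb1, hs1⟩ | ⟨hb1, hs1⟩ <;>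
          rcases gph_step w (b+t) with ⟨hb2, hs2⟩ | ⟨hb2, hs2⟩
        · rw [show a + (t+1) = (a+t)+1 by omega, show b+(t+1) = (b+t)+1 by omega, hs1, hs2]
          exact Nat.ModEq.add_right 1 ih.1
        · rw [hb1] at hL; rw [hb2] at hL; cases hL
        · rw [hb1] at hL; rw [hb2] at hL; cases hL
        · rw [show a + (t+1) = (a+t)+1 by omega, show b+(t+1) = (b+t)+1 by omega, hs1, hs2]
          exact Nat.ModEq.add_right 2 ih.1
      refine ⟨hR, ?_⟩
      exact hstepL _ _ (by omega) (by omega) hR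
  rcases Nat.lt_or_ge n1 n2 with hlt | hge
  · refine ⟨n1, n2 - n1, by omega, fun m hm => ?_⟩
    have := (main n1 n2 hn1 hn2 heq (m - n1)).2
    have e1 : n1 + (m - n1) = m := by omega
    have e2 : n2 + (m - n1) = m + (n2 - n1) := by omega
    rw [e1, e2] at this
    exact this.symm
  · have hlt : n2 < n1 := by omega
    refine ⟨n2, n1 - n2, by omega, fun m hm => ?_⟩
    have := (main n1 n2 hn1 hn2 heq (m - n2)).2
    have e1 : n2 + (m - n2) = m := by omega
    have e2 : n1 + (m - n2) = m + (n1 - n2) := by omega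
    rw [e1, e2] at this
    exact this

end Gcore

lemma isSturmian_G : IsSturmianMorphism [false] [false, true] := by
  intro w w' hw hM
  have hne : ∀ n, (RSet w' n).Nonempty := by
    intro n
    by_contra h
    rw [Set.not_nonempty_iff_eq_empty] at h
    have hper := RSet_empty_period h
    have := periodic_transfer hM hper
    exact sturmian_not_period hw this
  have hcard : ∀ n, (RSet w' n).ncard = 1 := by
    intro n
    rcases hne n with ⟨z, hz⟩
    have : RSet w' n = {z} :=
      Set.eq_singleton_iff_unique_mem.2 ⟨hz, fun y hy => RSetG_subsingleton hM hw n y hy z hz⟩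
    rw [this, Set.ncard_singleton]
  have : ∀ n, pc w' n = n + 1 := by
    intro n
    induction n with
    | zero => exact pc_zero w'
    | succ n ih =>
      rw [pc_succ, hcard]
      omega
  exact this

-- ### Part 4 : the morphisms D = (10,1) and D̃ = (01,1)

lemma isSturmian_GE : IsSturmianMorphism [false, true] [false] := by
  have h := isSturmian_comp (f0 := [false]) (f1 := [false,true]) (g0 := [true]) (g1 := [false])
    isSturmian_G isSturmian_E (by simp) (by simp)
  exact h

lemma isSturmian_D : IsSturmianMorphism [true, false] [true] := by
  have h := isSturmian_comp (f0 := [true]) (f1 := [false]) (g0 := [false,true]) (g1 := [false])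
    isSturmian_E isSturmian_GE (by simp) (by simp)
  exact h

lemma Dtilde_conj (l : List Bool) :
    true :: applyM [false,true] [true] l = applyM [true,false] [true] l ++ [true] := by
  induction l with
  | nil => rfl
  | cons b t ih =>
    cases b
    · show true :: (false :: true :: applyM [false,true] [true] t)
        = true :: false :: (applyM [true,false] [true] t ++ [true])
      rw [← ih]
    · show true :: (true :: applyM [false,true] [true] t)
        = true :: (applyM [true,false] [true] t ++ [true])
      rw [← ih]

lemma isSturmian_Dtilde : IsSturmianMorphism [false, true] [true] := by
  intro w w' hw hM
  set w'' : ℕ → Bool := fun j => if j = 0 then true else w' (j - 1) with hwdef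
  have hlen : ∀ l : List Bool,
      (applyM [true,false] [true] l).length = (applyM [false,true] [true] l).length := by
    intro l
    have := congrArg List.length (Dtilde_conj l)
    simp at this
    omega
  have hMD : MorphImage [true,false] [true] w w'' := by
    constructor
    · intro n
      have hA := hM.1 n
      rw [prefixOf_iff] at hA ⊢
      intro j hj
      have hj' : j < (applyM [false,true] [true] (pref w n)).length + 1 := by
        rw [← hlen] at *
        omega
      have e1 : (applyM [true,false] [true] (pref w n))[j]'hj
          = (applyM [true,false] [true] (pref w n) ++ [true])[j]'(by simp; omega) :=
        (List.getElem_append_left _).symm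
      have e2 := List.getElem_of_eq (Dtilde_conj (pref w n)) (i := j) (by simp; omega)
      rw [e1, ← e2, List.getElem_cons]
      by_cases h0 : j = 0
      · simp [h0, hwdef]
      · rw [dif_neg h0]
        have hb : j - 1 < (applyM [false,true] [true] (pref w n)).length := by
          rw [← hlen]
          omega
        rw [hA (j-1) hb]
        simp [hwdef, h0]
    · intro n
      rcases hM.2 n with ⟨m, hm⟩
      exact ⟨m, by rw [hlen]; exact hm⟩
  have hstw : Sturmian w'' := isSturmian_D w w'' hw hMD
  have hsub : ∀ n, Fac w' n ⊆ Fac w'' n := by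
    intro n u hu
    rcases mem_Fac_iff.1 hu with ⟨i, rfl⟩
    refine mem_Fac_iff.2 ⟨i+1, ?_⟩
    apply List.ext_getElem (by simp) (fun j h1 h2 => ?_)
    rw [getElem_win _ _ _ _ h1, getElem_win _ _ _ _ h2]
    simp only [hwdef]
    have : ¬ (i + 1 + j = 0) := by omega
    rw [if_neg this]
    congr 1
    omega
  have hub : ∀ n, pc w' n ≤ n + 1 := by
    intro n
    have h1 := Set.ncard_le_ncard (hsub n) (Fac_finite w'' n)
    have h2 : pc w'' n = n + 1 := hstw n
    unfold pc at *
    omega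
  have hne : ∀ n, (RSet w' n).Nonempty := by
    intro n
    by_contra h
    rw [Set.not_nonempty_iff_eq_empty] at h
    obtain ⟨k, d, hd, hper⟩ := RSet_empty_period h
    have hper2 : ∀ m, k+1 ≤ m → w'' (m + d) = w'' m := by
      intro m hm
      simp only [hwdef]
      rw [if_neg (by omega), if_neg (by omega)]
      have := hper (m-1) (by omega)
      have e : m - 1 + d = m + d - 1 := by omega
      rw [e] at this
      exact this
    have hb := period_pc_bounded hd hper2 (k+1+d)
    have h2 : pc w'' (k+1+d) = k+1+d+1 := hstw (k+1+d)
    omega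
  have hfin : ∀ n, pc w' n = n + 1 := by
    intro n
    induction n with
    | zero => exact pc_zero w'
    | succ n ih =>
      have h1 := pc_succ w' n
      have h2 : 0 < (RSet w' n).ncard := (Set.ncard_pos (RSet_finite w' n)).2 (hne n)
      have h3 := hub (n+1)
      omega
  exact hfin

-- ### Part 5 : classification of Christoffel pairs

inductive Reach : List Bool → List Bool → Prop
  | base : Reach [false] [true]
  | left {u v : List Bool} : Reach u v → Reach u (u ++ v)
  | right {u v : List Bool} : Reach u v → Reach (u ++ v) v

@[simp] lemma applyM_sF (f0 f1 : List Bool) : applyM f0 f1 [false] = f0 := by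
  simp [applyM]
@[simp] lemma applyM_sT (f0 f1 : List Bool) : applyM f0 f1 [true] = f1 := by
  simp [applyM]
@[simp] lemma applyM_sFT (f0 f1 : List Bool) : applyM f0 f1 [false, true] = f0 ++ f1 := by
  simp [applyM]

lemma isSturmian_swap {f0 f1 : List Bool} (h : IsSturmianMorphism f0 f1) :
    IsSturmianMorphism f1 f0 := by
  have h2 := isSturmian_comp (g0 := [true]) (g1 := [false]) h isSturmian_E (by simp) (by simp)
  rw [applyM_sT, applyM_sF] at h2
  exact h2

lemma reach_sturmian {u v : List Bool} (h : Reach u v) : IsSturmianMorphism u v := by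
  induction h with
  | base => exact isSturmian_id
  | @left u v _ ih =>
    have h2 := isSturmian_comp (g0 := [false]) (g1 := [false, true]) ih isSturmian_G
      (by simp) (by simp)
    rw [applyM_sF, applyM_sFT] at h2
    exact h2
  | @right u v _ ih =>
    have h2 := isSturmian_comp (g0 := [false, true]) (g1 := [true]) ih isSturmian_Dtilde
      (by simp) (by simp)
    rw [applyM_sFT, applyM_sT] at h2
    exact h2

-- balanced word helpers
lemma balanced_infix {x y : List Bool} (h : BalancedWord y) (hxy : x <:+: y) : BalancedWord x :=
  fun a b ha hb hab => h a b (ha.trans hxy) (hb.trans hxy) hab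

lemma balanced_reverse {x : List Bool} (h : BalancedWord x) : BalancedWord x.reverse := by
  intro a b ha hb hab
  have ha' : a.reverse <:+: x := by
    rw [← List.reverse_reverse x]
    exact List.reverse_infix.2 ha
  have hb' : b.reverse <:+: x := by
    rw [← List.reverse_reverse x]
    exact List.reverse_infix.2 hb
  have := h a.reverse b.reverse ha' hb' (by simp [hab])
  simpa [List.count_reverse] using this

lemma count_tf (l : List Bool) : l.count true + l.count false = l.length := by
  induction l with
  | nil => rfl
  | cons b t ih => cases b <;> simp [List.count_cons] <;> omega

lemma balanced_low_true {x : List Bool} (h : x.count true ≤ 1) : BalancedWord x := by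
  intro a b ha hb hab
  have : a.count true ≤ x.count true := ha.sublist.count_le true
  omega

lemma balanced_low_false {x : List Bool} (h : x.count false ≤ 1) : BalancedWord x := by
  intro a b ha hb hab
  have h1 : a.count true ≤ a.length := List.count_le_length
  have h2 : b.count false ≤ x.count false := hb.sublist.count_le false
  have h3 := count_tf b
  omega

lemma central_replicate_false (k : ℕ) : Central (List.replicate k false) := by
  refine ⟨by simp, ?_, ?_⟩
  · apply balanced_low_true
    simp [List.count_cons, List.count_append, List.count_replicate]
  · apply balanced_low_true
    simp [List.count_cons, List.count_append, List.count_replicate]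

lemma central_replicate_true (k : ℕ) : Central (List.replicate k true) := by
  refine ⟨by simp, ?_, ?_⟩
  · apply balanced_low_false
    simp [List.count_cons, List.count_append, List.count_replicate]
  · apply balanced_low_false
    simp [List.count_cons, List.count_append, List.count_replicate]

lemma eq_replicate_of_concat_eq_cons {a : Bool} : ∀ {l : List Bool},
    l ++ [a] = a :: l → l = List.replicate l.length a := by
  intro l
  induction l with
  | nil => intro _; rfl
  | cons b t ih =>
    intro h
    rw [List.cons_append] at h
    injection h with h1 h2
    subst h1
    rw [List.length_cons, List.replicate_succ]
    exact congrArg (b :: ·) (ih h2)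

-- ### Part 6 : splitting lemmas for central words

lemma succ_split {s t : List Bool} (heq : t ++ ([false,true] ++ s) = s ++ ([true,false] ++ t))
    (hlen : t.length = s.length + 1) : t = s ++ [true] := by
  have heq' := heq
  have h1 : (t ++ ([false,true] ++ s)).take t.length = t := List.take_left
  rw [heq'] at h1
  rw [List.take_append, List.take_of_length_le (by omega)] at h1
  rw [show t.length - s.length = 1 from by omega] at h1
  simpa using h1.symm

lemma count_map_not (l : List Bool) : (l.map (fun b => !b)).count true = l.count false := by
  induction l with
  | nil => rfl
  | cons c t ih => cases c <;> simp [List.count_cons, ih]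

lemma balanced_map_not {x : List Bool} (h : BalancedWord x) :
    BalancedWord (x.map (fun b => !b)) := by
  intro a b ha hb hab
  have hinv : ∀ l : List Bool, (l.map (fun b => !b)).map (fun b => !b) = l := by
    intro l
    simp [List.map_map, Function.comp_def]
  obtain ⟨p, q, hp⟩ := ha
  obtain ⟨p', q', hp'⟩ := hb
  have ha' : a.map (fun b => !b) <:+: x := by
    refine ⟨p.map (fun b => !b), q.map (fun b => !b), ?_⟩
    have := congrArg (List.map (fun b : Bool => !b)) hp
    simpa [hinv] using this
  have hb' : b.map (fun b => !b) <:+: x := by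
    refine ⟨p'.map (fun b => !b), q'.map (fun b => !b), ?_⟩
    have := congrArg (List.map (fun b : Bool => !b)) hp'
    simpa [hinv] using this
  have hbal := h (b.map (fun b => !b)) (a.map (fun b => !b)) hb' ha' (by simp [hab])
  have ca := count_tf a
  have cb := count_tf b
  have ca' := count_map_not a
  have cb' := count_map_not b
  omega

lemma central_map_not {x : List Bool} (h : Central x) : Central (x.map (fun b => !b)) := by
  obtain ⟨hpal, hb1, hb2⟩ := h
  refine ⟨?_, ?_, ?_⟩
  · rw [← List.map_reverse, hpal]
  · have := balanced_map_not hb2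
    simpa using this
  · have := balanced_map_not hb1
    simpa using this

lemma central_split {s t : List Bool} (hs : Central s) (ht : Central t)
    (heq : t ++ ([false,true] ++ s) = s ++ ([true,false] ++ t))
    (hlen : s.length + 2 ≤ t.length) :
    ∃ r, Central r ∧ t = s ++ ([true,false] ++ r) := by
  have heq' : t ++ ([false,true] ++ s) = (s ++ [true,false]) ++ t := by
    simpa [List.append_assoc] using heq
  have hdec : ∃ r : List Bool, t = s ++ ([true,false] ++ r) := by
    rcases List.append_eq_append_iff.1 heq' with ⟨a', ha1, _⟩ | ⟨c', hc1, _⟩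
    · have hlen' : a'.length = 0 := by
        have := congrArg List.length ha1
        simp at this
        omega
      rw [List.eq_nil_of_length_eq_zero hlen'] at ha1
      refine ⟨[], ?_⟩
      rw [List.append_nil] at ha1
      rw [← ha1]
      simp
    · exact ⟨c', by rw [hc1]; simp⟩
  obtain ⟨r, htr⟩ := hdec
  have hstar : r ++ ([false,true] ++ s) = s ++ ([true,false] ++ r) := by
    have h := heq'
    rw [htr] at h
    have h2 : (s ++ [true,false]) ++ (r ++ ([false,true] ++ s))
        = (s ++ [true,false]) ++ (s ++ ([true,false] ++ r)) := by
      simpa [List.append_assoc] using h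
    exact List.append_cancel_left h2
  have hpal : r.reverse = r := by
    have h1 : t.reverse = r.reverse ++ ([false,true] ++ s) := by
      rw [htr]
      simp [List.reverse_append, hs.1]
    have h2 : r.reverse ++ ([false,true] ++ s) = t := by rw [← h1, ht.1]
    have h3 : r.reverse ++ ([false,true] ++ s) = r ++ ([false,true] ++ s) := by
      rw [h2, htr, ← hstar]
    exact List.append_cancel_right h3
  have hb1 : BalancedWord (false :: (r ++ [true])) := by
    apply balanced_infix ht.2.1
    refine ⟨false :: (s ++ [true]), [], ?_⟩
    rw [htr]
    simp
  refine ⟨r, ⟨hpal, hb1, ?_⟩, htr⟩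
  have hrev2 : (false :: (r ++ [true])).reverse = true :: (r ++ [false]) := by
    simp [hpal]
  rw [← hrev2]
  exact balanced_reverse hb1

-- ### Part 7 : classification

lemma christoffel_nonempty {x : List Bool} (h : IsLowerChristoffel x) : x ≠ [] := by
  rcases h with rfl | rfl | ⟨c, _, rfl⟩ <;> simp

lemma map_not_invol (l : List Bool) : (l.map (fun b => !b)).map (fun b => !b) = l := by
  simp [List.map_map, Function.comp_def]

lemma christoffel_reach_aux : ∀ N : ℕ, ∀ u v : List Bool, u.length + v.length ≤ N →
    IsLowerChristoffel u → IsLowerChristoffel v → IsLowerChristoffel (u ++ v) → Reach u v := by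
  intro N
  induction N with
  | zero =>
    intro u v hN hu _ _
    exfalso
    have := List.length_pos_iff.2 (christoffel_nonempty hu)
    omega
  | succ N ih =>
    intro u v hN hu hv huv
    have hul : 0 < u.length := List.length_pos_iff.2 (christoffel_nonempty hu)
    have hvl : 0 < v.length := List.length_pos_iff.2 (christoffel_nonempty hv)
    rcases huv with h | h | ⟨c, hc, hceq⟩
    · exfalso
      have := congrArg List.length h
      simp at this
      omega
    · exfalso
      have := congrArg List.length h
      simp at this
      omega
    rcases hu with rfl | rfl | ⟨s, hs, rfl⟩
    · -- u = [false]
      rcases hv with rfl | rfl | ⟨t, ht, rfl⟩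
      · -- v = [false] : contradiction
        exfalso
        have h2 := congrArg (List.count true) hceq
        simp [List.count_append, List.count_cons] at h2
      · exact Reach.base
      · -- u = [false], v = 0t1
        have hvC : IsLowerChristoffel (false :: (t ++ [true])) := Or.inr (Or.inr ⟨t, ht, rfl⟩)
        have hc2 : (false : Bool) :: t = c := by
          have h0 : false :: ((false :: t) ++ [true]) = false :: (c ++ [true]) := by
            simpa using hceq
          injection h0 with _ h2
          exact (List.append_inj' h2 rfl).1
        have hcen : Central (false :: t) := hc2 ▸ hc
        have hpal : t ++ [false] = false :: t := by
          have h1 := hcen.1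
          rw [List.reverse_cons, ht.1] at h1
          exact h1
        have hrep := eq_replicate_of_concat_eq_cons hpal
        set k := t.length with hk
        have hv' : IsLowerChristoffel (List.replicate k false ++ [true]) := by
          cases k with
          | zero => exact Or.inr (Or.inl rfl)
          | succ k2 => exact Or.inr (Or.inr ⟨List.replicate k2 false, central_replicate_false k2,
              by rw [List.replicate_succ]; rfl⟩)
        have hveq : (false : Bool) :: (t ++ [true]) = [false] ++ (List.replicate k false ++ [true]) := by
          rw [hrep]
          rfl
        have hR : Reach [false] (List.replicate k false ++ [true]) := by
          apply ih
          · have : t.length + 3 ≤ N + 1 := by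
              have := hN
              simp at this ⊢
              omega
            simp
            omega
          · exact Or.inl rfl
          · exact hv'
          · show IsLowerChristoffel ([false] ++ (List.replicate k false ++ [true]))
            rw [← hveq]
            exact hvC
        have hR2 := Reach.left hR
        rw [← hveq] at hR2
        exact hR2
    · -- u = [true] : contradiction
      exfalso
      have h0 : true :: v = false :: (c ++ [true]) := by simpa using hceq
      have : (true : Bool) = false := by injection h0
      simp at this
    · -- u = 0s1
      have huC : IsLowerChristoffel (false :: (s ++ [true])) := Or.inr (Or.inr ⟨s, hs, rfl⟩)
      rcases hv with rfl | rfl | ⟨t, ht, rfl⟩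
      · -- v = [false] : contradiction
        exfalso
        have h2 := congrArg List.getLast? hceq
        have e : (false : Bool) :: (c ++ [true]) = (false :: c) ++ [true] := rfl
        rw [e, List.getLast?_concat, List.getLast?_concat] at h2
        simp at h2
      · -- v = [true]
        have hc2 : s ++ [true] = c := by
          have h0 : false :: ((s ++ [true]) ++ [true]) = false :: (c ++ [true]) := by
            simpa using hceq
          injection h0 with _ h2
          exact (List.append_inj' h2 rfl).1
        have hcen : Central (s ++ [true]) := hc2 ▸ hc
        have hpal : s ++ [true] = true :: s := by
          have h1 := hcen.1
          rw [List.reverse_append, hs.1] at h1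
          simpa using h1.symm
        have hrep := eq_replicate_of_concat_eq_cons hpal
        set k := s.length with hk
        have hu' : IsLowerChristoffel (false :: List.replicate k true) := by
          cases k with
          | zero => exact Or.inl rfl
          | succ k2 => exact Or.inr (Or.inr ⟨List.replicate k2 true, central_replicate_true k2,
              by rw [List.replicate_succ']⟩)
        have hueq : (false : Bool) :: (s ++ [true]) = (false :: List.replicate k true) ++ [true] := by
          rw [hrep]
          rfl
        have hR : Reach (false :: List.replicate k true) [true] := by
          apply ih
          · simp
            have := hN
            simp at this
            omega
          · exact hu'
          · exact Or.inr (Or.inl rfl)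
          · show IsLowerChristoffel ((false :: List.replicate k true) ++ [true])
            rw [← hueq]
            exact huC
        have hR2 := Reach.right hR
        rw [← hueq] at hR2
        exact hR2
      · -- MAIN : u = 0s1, v = 0t1
        have hvC : IsLowerChristoffel (false :: (t ++ [true])) := Or.inr (Or.inr ⟨t, ht, rfl⟩)
        have hkey : (false :: (s ++ [true])) ++ (false :: (t ++ [true]))
            = false :: ((s ++ ([true,false] ++ t)) ++ [true]) := by
          simp
        have hc2 : s ++ ([true,false] ++ t) = c := by
          have h0 : false :: ((s ++ ([true,false] ++ t)) ++ [true]) = false :: (c ++ [true]) := by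
            rw [← hkey]; exact hceq
          injection h0 with _ h2
          exact (List.append_inj' h2 rfl).1
        have hcen : Central (s ++ ([true,false] ++ t)) := hc2 ▸ hc
        have heqM : t ++ ([false,true] ++ s) = s ++ ([true,false] ++ t) := by
          have h1 : (s ++ ([true,false] ++ t)).reverse = t ++ ([false,true] ++ s) := by
            simp [List.reverse_append, hs.1, ht.1]
          rw [← h1, hcen.1]
        rcases lt_trichotomy s.length t.length with hlen | hlen | hlen
        · -- |s| < |t|
          rcases eq_or_lt_of_le (Nat.succ_le_of_lt hlen) with he1 | hlt2
          · -- |t| = |s| + 1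
            have hts : t = s ++ [true] := succ_split heqM he1.symm
            have hveq : (false : Bool) :: (t ++ [true]) = (false :: (s ++ [true])) ++ [true] := by
              rw [hts]
              rfl
            have hR : Reach (false :: (s ++ [true])) [true] := by
              apply ih
              · simp
                have := hN
                simp at this
                omega
              · exact huC
              · exact Or.inr (Or.inl rfl)
              · show IsLowerChristoffel ((false :: (s ++ [true])) ++ [true])
                rw [← hveq]
                exact hvC
            have hR2 := Reach.left hR
            rw [← hveq] at hR2
            exact hR2
          · -- |t| ≥ |s| + 2
            obtain ⟨r, hrc, htr⟩ := central_split hs ht heqM (by omega)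
            have hveq : (false : Bool) :: (t ++ [true])
                = (false :: (s ++ [true])) ++ (false :: (r ++ [true])) := by
              rw [htr]
              simp
            have hrlen : t.length = s.length + 2 + r.length := by
              have := congrArg List.length htr
              simp at this
              omega
            have hR : Reach (false :: (s ++ [true])) (false :: (r ++ [true])) := by
              apply ih
              · simp
                have := hN
                simp at this
                omega
              · exact huC
              · exact Or.inr (Or.inr ⟨r, hrc, rfl⟩)
              · show IsLowerChristoffel ((false :: (s ++ [true])) ++ (false :: (r ++ [true])))
                rw [← hveq]
                exact hvC
            have hR2 := Reach.left hR
            rw [← hveq] at hR2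
            exact hR2
        · -- |s| = |t| : contradiction
          exfalso
          rcases List.append_inj heqM.symm (by omega) with ⟨_, h2⟩
          have : (true : Bool) = false := by injection h2
          simp at this
        · -- |t| < |s| : mirror via complementation
          have heqE : (t.map (fun b => !b)) ++ ([true,false] ++ s.map (fun b => !b))
              = (s.map (fun b => !b)) ++ ([false,true] ++ t.map (fun b => !b)) := by
            have := congrArg (List.map (fun b : Bool => !b)) heqM
            simpa using this
          rcases eq_or_lt_of_le (Nat.succ_le_of_lt hlen) with he1 | hlt2
          · -- |s| = |t| + 1
            have hE : s.map (fun b => !b) = (t.map (fun b => !b)) ++ [true] := by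
              apply succ_split heqE.symm
              simp
              omega
            have hstf : s = t ++ [false] := by
              have := congrArg (List.map (fun b : Bool => !b)) hE
              simpa [List.map_map, Function.comp_def, Bool.not_not] using this
            have hsft : s = false :: t := by
              rw [← hs.1, hstf]
              simp [ht.1]
            have hueq : (false : Bool) :: (s ++ [true]) = [false] ++ (false :: (t ++ [true])) := by
              rw [hsft]
              rfl
            have hR : Reach [false] (false :: (t ++ [true])) := by
              apply ih
              · simp
                have := hN
                simp at this
                omega
              · exact Or.inl rfl
              · exact hvC
              · show IsLowerChristoffel ([false] ++ (false :: (t ++ [true])))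
                rw [← hueq]
                exact huC
            have hR2 := Reach.right hR
            rw [← hueq] at hR2
            exact hR2
          · -- |s| ≥ |t| + 2
            obtain ⟨ρ, hρc, hsE⟩ := central_split (central_map_not ht) (central_map_not hs)
              heqE.symm (by simp; omega)
            have hsdec : s = t ++ ([false,true] ++ ρ.map (fun b => !b)) := by
              have := congrArg (List.map (fun b : Bool => !b)) hsE
              simpa [List.map_map, Function.comp_def, Bool.not_not] using this
            have hσpal : (ρ.map (fun b => !b)).reverse = ρ.map (fun b => !b) := by
              rw [← List.map_reverse, hρc.1]
            have hsσ : s = (ρ.map (fun b => !b)) ++ ([true,false] ++ t) := by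
              rw [← hs.1, hsdec]
              simp [List.reverse_append, ht.1, hσpal]
            have hσc : Central (ρ.map (fun b => !b)) := central_map_not hρc
            have hueq : (false : Bool) :: (s ++ [true])
                = (false :: ((ρ.map (fun b => !b)) ++ [true])) ++ (false :: (t ++ [true])) := by
              rw [hsσ]
              simp
            have hρlen : s.length = ρ.length + 2 + t.length := by
              have := congrArg List.length hsσ
              simp at this
              omega
            have hR : Reach (false :: ((ρ.map (fun b => !b)) ++ [true])) (false :: (t ++ [true])) := by
              apply ih
              · simp
                have := hN
                simp at this
                omega
              · exact Or.inr (Or.inr ⟨ρ.map (fun b => !b), hσc, rfl⟩)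
              · exact hvC
              · show IsLowerChristoffel
                  ((false :: ((ρ.map (fun b => !b)) ++ [true])) ++ (false :: (t ++ [true])))
                rw [← hueq]
                exact huC
            have hR2 := Reach.right hR
            rw [← hueq] at hR2
            exact hR2

end CPSaux

/-- If `u`, `v`, `uv` are Christoffel words, then the morphisms `0 ↦ u, 1 ↦ v` and
`0 ↦ v, 1 ↦ u` are Sturmian. -/
theorem christoffel_pair_sturmian_morphism (u v : List Bool)
    (hu : IsLowerChristoffel u) (hv : IsLowerChristoffel v)
    (huv : IsLowerChristoffel (u ++ v)) :
    IsSturmianMorphism u v ∧ IsSturmianMorphism v u := by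
  have hR : Reach u v := christoffel_reach_aux (u.length + v.length) u v le_rfl hu hv huv
  exact ⟨reach_sturmian hR, isSturmian_swap (reach_sturmian hR)⟩
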